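/- For every nonempty finite set X of vertices of the caterpillar graph L, there exists a locally injective simplicial map f : X → V(L) of the induced subgraph on X into L such that no graph automorphism φ of L satisfies φ(x) = f(x) for all x ∈ X. In other words, the caterpillar graph L has no finite rigid sets. -/

import Mathlib

open SimpleGraph

/-- The caterpillar graph `L`: a doubly infinite path of "spine" vertices `(n, 0)`, each
with a pendant "leg" vertex `(n, 1)` attached. -/
def caterpillar : SimpleGraph (ℤ × Fin 2) where
  Adj p q := (p.2 = 0 ∧ q.2 = 0 ∧ |p.1 - q.1| = 1) ∨
    (p.1 = q.1 ∧ ((p.2 = 0 ∧ q.2 = 1) ∨ (p.2 = 1 ∧ q.2 = 0)))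
  symm := by
    constructor
    intro p q h
    rcases h with ⟨h0, h1, h2⟩ | ⟨h0, h1⟩
    · exact Or.inl ⟨h1, h0, by rw [abs_sub_comm]; exact h2⟩
    · exact Or.inr ⟨h0.symm, by tauto⟩
  loopless := by
    constructor
    intro p h
    rcases h with ⟨_, _, h2⟩ | ⟨_, ⟨h1, h2⟩ | ⟨h1, h2⟩⟩
    · simp at h2
    · rw [h1] at h2; exact absurd h2 (by decide)
    · rw [h1] at h2; exact absurd h2 (by decide)

lemma caterpillar_leg_nbr (k : ℤ) (v : ℤ × Fin 2)
    (h : caterpillar.Adj (k, 1) v) : v = (k, 0) := by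
  obtain ⟨a, b⟩ := v
  rcases h with ⟨h0, _, _⟩ | ⟨h0, ⟨h1, _⟩ | ⟨_, h2⟩⟩
  · exact absurd (show (1 : Fin 2) = 0 from h0) (by decide)
  · exact absurd (show (1 : Fin 2) = 0 from h1) (by decide)
  · simp only [Prod.mk.injEq]
    exact ⟨(show k = a from h0).symm, h2⟩

lemma caterpillar_spine_nbr (m : ℤ) (v : ℤ × Fin 2)
    (h : caterpillar.Adj (m, 0) v) :
    v = (m - 1, 0) ∨ v = (m + 1, 0) ∨ v = (m, 1) := by
  obtain ⟨a, b⟩ := v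
  rcases h with ⟨_, h1, h2⟩ | ⟨h0, ⟨_, h1⟩ | ⟨h1, _⟩⟩
  · rcases (abs_eq (by norm_num : (0:ℤ) ≤ 1)).mp h2 with h | h
    · have h' : m - a = 1 := h
      left
      simp only [Prod.mk.injEq]
      exact ⟨by omega, h1⟩
    · have h' : m - a = -1 := h
      right; left
      simp only [Prod.mk.injEq]
      exact ⟨by omega, h1⟩
  · right; right
    simp only [Prod.mk.injEq]
    exact ⟨(show m = a from h0).symm, h1⟩
  · exact absurd (show (0 : Fin 2) = 1 from h1) (by decide)

lemma caterpillar_adj_spine (m n : ℤ) (h : |m - n| = 1) :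
    caterpillar.Adj (m, 0) (n, 0) := Or.inl ⟨rfl, rfl, h⟩

lemma caterpillar_adj_leg (m : ℤ) : caterpillar.Adj (m, 0) (m, 1) :=
  Or.inr ⟨rfl, Or.inl ⟨rfl, rfl⟩⟩

/-- An automorphism of the caterpillar never sends a spine vertex to a leg vertex. -/
lemma caterpillar_spine_not_leg (φ : caterpillar ≃g caterpillar) (n k : ℤ) :
    φ (n, 0) ≠ (k, 1) := by
  intro h
  have h1 : caterpillar.Adj (n, 0) (n - 1, 0) :=
    caterpillar_adj_spine _ _ (by rw [show n - (n - 1) = 1 by ring]; exact abs_one)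
  have h2 : caterpillar.Adj (n, 0) (n + 1, 0) :=
    caterpillar_adj_spine _ _ (by rw [show n - (n + 1) = -1 by ring]; norm_num)
  have ha : caterpillar.Adj (φ (n, 0)) (φ (n - 1, 0)) := φ.map_adj_iff.mpr h1
  have hb : caterpillar.Adj (φ (n, 0)) (φ (n + 1, 0)) := φ.map_adj_iff.mpr h2
  rw [h] at ha hb
  have ha' := caterpillar_leg_nbr _ _ ha
  have hb' := caterpillar_leg_nbr _ _ hb
  have : ((n - 1 : ℤ), (0 : Fin 2)) = ((n + 1 : ℤ), (0 : Fin 2)) :=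
    φ.injective (ha'.trans hb'.symm)
  simp only [Prod.mk.injEq] at this
  omega

/-- The caterpillar graph has no finite rigid sets: for every nonempty finite set `X` of
vertices there is a locally injective simplicial map of the induced subgraph on `X` into
the caterpillar which is not the restriction of any automorphism. -/
theorem caterpillar_no_finite_rigid_sets :
    ∀ X : Finset (ℤ × Fin 2), X.Nonempty →
      ∃ f : ℤ × Fin 2 → ℤ × Fin 2,
        (∀ u ∈ X, ∀ v ∈ X, caterpillar.Adj u v → caterpillar.Adj (f u) (f v)) ∧
        (∀ v ∈ X, ∀ u ∈ X, ∀ w ∈ X,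
          (u = v ∨ caterpillar.Adj v u) → (w = v ∨ caterpillar.Adj v w) →
          f u = f w → u = w) ∧
        (∀ φ : caterpillar ≃g caterpillar, ∃ x ∈ X, φ x ≠ f x) := by
  intro X hX
  have hS : (X.image Prod.fst).Nonempty := hX.image _
  set M := (X.image Prod.fst).max' hS with hMdef
  have hle : ∀ p ∈ X, p.1 ≤ M := fun p hp =>
    Finset.le_max' _ p.1 (Finset.mem_image_of_mem _ hp)
  have hMmem : ∃ p ∈ X, p.1 = M := by
    have := (X.image Prod.fst).max'_mem hS
    rw [Finset.mem_image] at this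
    obtain ⟨p, hp, hp'⟩ := this
    exact ⟨p, hp, hp'⟩
  by_cases hA : ((M, 1) : ℤ × Fin 2) ∈ X
  · -- Case A: the top leg is in X; swap (M,1) ↔ (M+1,0).
    refine ⟨Equiv.swap (M, 1) (M + 1, 0), ?_, ?_, ?_⟩
    · intro u hu v hv h
      have hu' : u ≠ ((M + 1, 0) : ℤ × Fin 2) := by
        intro he
        have h1 : u.1 ≤ M := hle u hu
        rw [he] at h1
        have h2 : M + 1 ≤ M := h1
        omega
      have hv' : v ≠ ((M + 1, 0) : ℤ × Fin 2) := by
        intro he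
        have h1 : v.1 ≤ M := hle v hv
        rw [he] at h1
        have h2 : M + 1 ≤ M := h1
        omega
      by_cases hu1 : u = ((M, 1) : ℤ × Fin 2)
      · subst hu1
        have hveq : v = ((M, 0) : ℤ × Fin 2) := caterpillar_leg_nbr _ _ h
        subst hveq
        rw [Equiv.swap_apply_left,
          Equiv.swap_apply_of_ne_of_ne (by simp) (by simp)]
        exact caterpillar_adj_spine _ _ (by rw [show M + 1 - M = 1 by ring]; exact abs_one)
      · by_cases hv1 : v = ((M, 1) : ℤ × Fin 2)
        · subst hv1
          have hueq : u = ((M, 0) : ℤ × Fin 2) := caterpillar_leg_nbr _ _ (caterpillar.adj_symm h)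
          subst hueq
          rw [Equiv.swap_apply_left,
            Equiv.swap_apply_of_ne_of_ne (by simp) (by simp)]
          exact caterpillar_adj_spine _ _
            (by rw [show M - (M + 1) = -1 by ring]; norm_num)
        · rw [Equiv.swap_apply_of_ne_of_ne hu1 hu',
            Equiv.swap_apply_of_ne_of_ne hv1 hv']
          exact h
    · intro v _ u _ w _ _ _ hfe
      exact (Equiv.swap _ _).injective hfe
    · intro φ
      refine ⟨(M, 1), hA, ?_⟩
      rw [Equiv.swap_apply_left]
      intro h
      have : φ.symm (M + 1, 0) = ((M, 1) : ℤ × Fin 2) := by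
        rw [← h]; exact φ.symm_apply_apply _
      exact caterpillar_spine_not_leg φ.symm (M + 1) M this
  · -- Case B: the top leg is not in X, so (M,0) ∈ X; swap (M,0) ↔ (M-1,1).
    have hB : ((M, 0) : ℤ × Fin 2) ∈ X := by
      obtain ⟨p, hp, hp'⟩ := hMmem
      obtain ⟨a, b⟩ := p
      simp only at hp'
      subst hp'
      fin_cases b
      · exact hp
      · exact absurd hp hA
    have hne1 : ((M - 1, 0) : ℤ × Fin 2) ≠ (M, 0) := by
      intro h
      rw [Prod.mk.injEq] at h
      omega
    have hne2 : ((M - 1, 0) : ℤ × Fin 2) ≠ (M - 1, 1) := by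
      intro h
      rw [Prod.mk.injEq] at h
      exact absurd h.2 (by decide)
    refine ⟨Equiv.swap (M, 0) (M - 1, 1), ?_, ?_, ?_⟩
    · intro u hu v hv h
      by_cases hu0 : u = ((M, 0) : ℤ × Fin 2)
      · subst hu0
        rcases caterpillar_spine_nbr _ _ h with hv1 | hv1 | hv1
        · subst hv1
          rw [Equiv.swap_apply_left, Equiv.swap_apply_of_ne_of_ne hne1 hne2]
          exact caterpillar.adj_symm (caterpillar_adj_leg (M - 1))
        · exfalso
          have h1 : v.1 ≤ M := hle v hv
          rw [hv1] at h1
          have h2 : M + 1 ≤ M := h1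
          omega
        · exact absurd (hv1 ▸ hv) hA
      · by_cases hu1 : u = ((M - 1, 1) : ℤ × Fin 2)
        · subst hu1
          have hveq : v = ((M - 1, 0) : ℤ × Fin 2) := caterpillar_leg_nbr _ _ h
          subst hveq
          rw [Equiv.swap_apply_right, Equiv.swap_apply_of_ne_of_ne hne1 hne2]
          exact caterpillar_adj_spine _ _ (by rw [show M - (M - 1) = 1 by ring]; exact abs_one)
        · by_cases hv0 : v = ((M, 0) : ℤ × Fin 2)
          · subst hv0
            rcases caterpillar_spine_nbr _ _ (caterpillar.adj_symm h) with hu1' | hu1' | hu1'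
            · subst hu1'
              rw [Equiv.swap_apply_left, Equiv.swap_apply_of_ne_of_ne hne1 hne2]
              exact caterpillar_adj_leg (M - 1)
            · exfalso
              have h1 : u.1 ≤ M := hle u hu
              rw [hu1'] at h1
              have h2 : M + 1 ≤ M := h1
              omega
            · exact absurd (hu1' ▸ hu) hA
          · by_cases hv1 : v = ((M - 1, 1) : ℤ × Fin 2)
            · subst hv1
              have hueq : u = ((M - 1, 0) : ℤ × Fin 2) :=
                caterpillar_leg_nbr _ _ (caterpillar.adj_symm h)
              subst hueq
              rw [Equiv.swap_apply_right, Equiv.swap_apply_of_ne_of_ne hne1 hne2]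
              exact caterpillar.adj_symm (caterpillar_adj_spine _ _
                (by rw [show M - (M - 1) = 1 by ring]; exact abs_one))
            · rw [Equiv.swap_apply_of_ne_of_ne hu0 hu1,
                Equiv.swap_apply_of_ne_of_ne hv0 hv1]
              exact h
    · intro v _ u _ w _ _ _ hfe
      exact (Equiv.swap _ _).injective hfe
    · intro φ
      refine ⟨(M, 0), hB, ?_⟩
      rw [Equiv.swap_apply_left]
      exact caterpillar_spine_not_leg φ M (M - 1)
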